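/- Let A be the incidence matrix of size-b subsets of E, and let ρ ∈ [0,1]^{|E|} with ∑_e ρ_e = b. For every vector w ∈ ℝ^{|E|} such that ∑_{e ∈ T} w_e ≤ 0 for every size-b subset T of E, we have ∑_e w_e ρ_e ≤ 0. -/

import Mathlib

/-- Farkas-certificate inequality: if `w` sums to a nonpositive value over every
size-`b` subset of `E`, then `∑ w_e ρ_e ≤ 0` for any `ρ ∈ [0,1]^E` with total
mass `b`. -/
theorem farkas_certificate {E : Type*} [DecidableEq E] [Fintype E] (b : ℕ)
    (hb : 1 ≤ b) (hbE : b ≤ Fintype.card E)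
    (ρ : E → ℝ) (h0 : ∀ e, 0 ≤ ρ e) (h1 : ∀ e, ρ e ≤ 1)
    (hsum : ∑ e : E, ρ e = (b : ℝ))
    (w : E → ℝ) (hw : ∀ T : Finset E, T.card = b → ∑ e ∈ T, w e ≤ 0) :
    ∑ e : E, w e * ρ e ≤ 0 := by
  obtain ⟨T₀, -, hT₀⟩ := Finset.exists_subset_card_eq (s := (Finset.univ : Finset E)) (n := b)
    (by simpa using hbE)
  obtain ⟨T, hTmem, hTmax⟩ := Finset.exists_max_image (Finset.univ.powersetCard b)
    (fun T => ∑ e ∈ T, w e) ⟨T₀, by simp [Finset.mem_powersetCard, hT₀]⟩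
  have hTcard : T.card = b := (Finset.mem_powersetCard.mp hTmem).2
  have hTne : T.Nonempty := Finset.card_pos.mp (by omega)
  obtain ⟨e₀, he₀T, he₀min⟩ := T.exists_min_image w hTne
  set t := w e₀ with ht
  have hout : ∀ f, f ∉ T → w f ≤ t := by
    intro f hf
    by_contra hlt
    push_neg at hlt
    set T' := insert f (T.erase e₀) with hT'
    have hfne : f ∉ T.erase e₀ := fun h => hf (Finset.mem_of_mem_erase h)
    have hfT' : T'.card = b := by
      rw [hT', Finset.card_insert_of_notMem hfne, Finset.card_erase_of_mem he₀T]
      omega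
    have hmem' : T' ∈ Finset.univ.powersetCard b := by
      simp [Finset.mem_powersetCard, hfT']
    have hsum' : ∑ e ∈ T', w e = ∑ e ∈ T, w e - w e₀ + w f := by
      rw [hT', Finset.sum_insert hfne, Finset.sum_erase_eq_sub he₀T]; ring
    have := hTmax T' hmem'
    rw [hsum'] at this
    linarith
  have key : ∀ e, w e * ρ e ≤ (if e ∈ T then w e - t else 0) + t * ρ e := by
    intro e
    by_cases he : e ∈ T
    · simp only [he, if_true]
      have := he₀min e he
      nlinarith [h0 e, h1 e]
    · simp only [he, if_false]
      have := hout e he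
      nlinarith [h0 e]
  have step1 : ∑ e : E, w e * ρ e ≤
      ∑ e : E, ((if e ∈ T then w e - t else 0) + t * ρ e) :=
    Finset.sum_le_sum fun e _ => key e
  have step2 : ∑ e : E, ((if e ∈ T then w e - t else 0) + t * ρ e)
      = (∑ e ∈ T, (w e - t)) + t * ∑ e : E, ρ e := by
    rw [Finset.sum_add_distrib, ← Finset.mul_sum]
    congr 1
    rw [← Finset.sum_filter]
    congr 1
    ext e
    simp
  have step3 : (∑ e ∈ T, (w e - t)) + t * ∑ e : E, ρ e = ∑ e ∈ T, w e := by
    rw [hsum, Finset.sum_sub_distrib, Finset.sum_const, hTcard, nsmul_eq_mul]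
    ring
  have := hw T hTcard
  linarith [step1, step2.le, step3]
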